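/- Let V be a vector space over the field with two elements GF(2), let x : ι → V be a linearly independent family, and let S ⊆ ι. Let W be a set of vectors such that each w ∈ W equals the sum Σ_{i ∈ F_w} x_i over some finite set F_w ⊆ ι for which the number of indices in F_w outside S is even. Then for every m ∉ S, the vector x_m does not lie in the GF(2)-linear span of {x_i : i ∈ S} ∪ W; that is, a client with side-information S decodes no new message from the transmissions W. -/
import Mathlib


/-- Let `V` be a vector space over `GF(2)`, let `x : ι → V` be a
linearly independent family, and let `S ⊆ ι`.  Let `W` be a set of vectors such that
each `w ∈ W` equals the sum `Σ_{i ∈ F_w} x i` over some finite set `F_w ⊆ ι` for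
which the number of indices in `F_w` outside `S` is even.  Then for every `m ∉ S`,
the vector `x m` does not lie in the `GF(2)`-linear span of `{x i : i ∈ S} ∪ W`;
that is, a client with side-information `S` decodes no new message from the
transmissions `W`. -/
theorem secure_even_parity {ι : Type*} {V : Type*} [AddCommGroup V]
    [Module (ZMod 2) V] (x : ι → V) (hx : LinearIndependent (ZMod 2) x)
    (S : Set ι) (W : Set V)
    (hW : ∀ w ∈ W, ∃ F : Finset ι,
      w = ∑ i ∈ F, x i ∧ Even (((F : Set ι) \ S).ncard)) :
    ∀ m : ι, m ∉ S → x m ∉ Submodule.span (ZMod 2) (x '' S ∪ W) := by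
  classical
  intro m hm hmem
  set p := Submodule.span (ZMod 2) (Set.range x) with hp
  let φ : p →ₗ[ZMod 2] ZMod 2 :=
    (Finsupp.linearCombination (ZMod 2) (fun i => if i ∈ S then (0 : ZMod 2) else 1)).comp
      hx.repr
  have hsum_mem : ∀ F : Finset ι, (∑ i ∈ F, x i) ∈ p := fun F =>
    Submodule.sum_mem _ fun i _ => Submodule.subset_span ⟨i, rfl⟩
  have hφ : ∀ (F : Finset ι) (h : (∑ i ∈ F, x i) ∈ p),
      φ ⟨∑ i ∈ F, x i, h⟩ = ((F.filter (fun i => i ∉ S)).card : ZMod 2) := by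
    intro F h
    have hrepr : hx.repr ⟨∑ i ∈ F, x i, h⟩ = ∑ i ∈ F, Finsupp.single i 1 := by
      apply hx.repr_eq
      simp [map_sum, Finsupp.linearCombination_single]
    have : φ ⟨∑ i ∈ F, x i, h⟩
        = ∑ i ∈ F, (if i ∈ S then (0 : ZMod 2) else 1) := by
      simp [φ, hrepr, map_sum, Finsupp.linearCombination_single]
    rw [this]
    rw [Finset.sum_ite, Finset.sum_const, Finset.sum_const]
    simp
  -- the submodule of elements of p with zero parity, viewed in V
  set q : Submodule (ZMod 2) V := (LinearMap.ker φ).map p.subtype with hq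
  have hsub : x '' S ∪ W ⊆ q := by
    rintro v (⟨i, hiS, rfl⟩ | hvW)
    · have hxi : x i = ∑ j ∈ ({i} : Finset ι), x j := by simp
      refine ⟨⟨x i, Submodule.subset_span ⟨i, rfl⟩⟩, ?_, rfl⟩
      have := hφ {i} (by rw [← hxi]; exact Submodule.subset_span ⟨i, rfl⟩)
      simp only [SetLike.mem_coe, LinearMap.mem_ker]
      have heq : (⟨x i, Submodule.subset_span ⟨i, rfl⟩⟩ : p)
          = ⟨∑ j ∈ ({i} : Finset ι), x j, by rw [← hxi]; exact Submodule.subset_span ⟨i, rfl⟩⟩ :=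
        Subtype.ext hxi
      rw [heq, this]
      simp [Finset.filter_singleton, hiS]
    · obtain ⟨F, rfl, hev⟩ := hW v hvW
      refine ⟨⟨_, hsum_mem F⟩, ?_, rfl⟩
      simp only [SetLike.mem_coe, LinearMap.mem_ker]
      rw [hφ F (hsum_mem F)]
      have hcard : ((F : Set ι) \ S).ncard = (F.filter (fun i => i ∉ S)).card := by
        have : ((F : Set ι) \ S) = ((F.filter (fun i => i ∉ S)) : Finset ι) := by
          ext j; simp [Set.mem_diff]
        rw [this, Set.ncard_coe_finset]
      rw [hcard] at hev
      obtain ⟨k, hk⟩ := hev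
      have : (F.filter (fun i => i ∉ S)).card = 2 * k := by omega
      rw [this, Nat.cast_mul, ZMod.natCast_self, zero_mul]
  have hle : Submodule.span (ZMod 2) (x '' S ∪ W) ≤ q := Submodule.span_le.mpr hsub
  obtain ⟨u, hu0, huv⟩ := hle hmem
  have hxm : x m = ∑ j ∈ ({m} : Finset ι), x j := by simp
  have hmemp : x m ∈ p := Submodule.subset_span ⟨m, rfl⟩
  have hueq : u = ⟨x m, hmemp⟩ := Subtype.ext huv
  have h1 : φ ⟨x m, hmemp⟩ = 1 := by
    have heq : (⟨x m, hmemp⟩ : p)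
        = ⟨∑ j ∈ ({m} : Finset ι), x j, by rw [← hxm]; exact hmemp⟩ := Subtype.ext hxm
    rw [heq, hφ]
    simp [Finset.filter_singleton, hm]
  rw [SetLike.mem_coe, LinearMap.mem_ker, hueq, h1] at hu0
  exact one_ne_zero hu0
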